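/- Let (W,S) be a Coxeter system, Q, Q' words in S, s_i, s_j ∈ S with m_{ij} = 3, and π ∈ W. Let Δ₁ = Δ(Q s_i s_j s_i Q'; π) and Δ₂ = Δ(Q s_j s_i s_j Q'; π). Let f₂ denote the position of the middle letter of the braid block in Δ₁ and g₂ that in Δ₂, and let 𝒱 identify the first position of the block in Δ₁ with the third in Δ₂ and vice versa. Then the maximal subcomplex of Δ₁ containing neither the vertex f₂ nor the edge {f₁,f₃}, and the maximal subcomplex of Δ₂ containing neither g₂ nor {g₁,g₃}, are isomorphic via the map fixing all positions of Q and Q' and sending f₁ ↦ g₃, f₃ ↦ g₁. -/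

import Mathlib

/-- The alternating word `i j i j ...` of length `n`. -/
def altWord {B : Type*} (i j : B) : ℕ → List B
  | 0 => []
  | n + 1 => i :: altWord j i n

@[simp] theorem altWord_length {B : Type*} (i j : B) (n : ℕ) :
    (altWord i j n).length = n := by
  induction n generalizing i j with
  | zero => rfl
  | succ n ih => simp [altWord, ih]

/-- `L` contains a reduced expression of `π` as a (not necessarily contiguous) subword. -/
def containsRed {B W : Type*} [Group W] {M : CoxeterMatrix B} (cs : CoxeterSystem M W)
    (π : W) (L : List B) : Prop :=
  ∃ P : List B, P.Sublist L ∧ cs.IsReduced P ∧ cs.wordProd P = π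

/-- The word obtained from `Q` by deleting the letters at the positions in `T`. -/
def cword {B : Type*} (Q : List B) (T : Finset (Fin Q.length)) : List B :=
  ((List.finRange Q.length).filter (fun p => p ∉ T)).map Q.get

/-- The subword complex `Δ(Q; π)`. -/
def SWC {B W : Type*} [Group W] {M : CoxeterMatrix B} (cs : CoxeterSystem M W)
    (Q : List B) (π : W) : Set (Finset (Fin Q.length)) :=
  {T | containsRed cs π (cword Q T)}

/-- The vertex identification between positions of `Q s_i s_j s_i Q'` and positions of
`Q s_j s_i s_j Q'`: it fixes all positions of `Q` and `Q'` (and the middle position of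
the braid block) and exchanges the first and third positions of the braid block
(`f₁ ↦ g₃`, `f₃ ↦ g₁`). -/
def braidSwap {B : Type*} (Q Q' : List B) (i j : B)
    (p : Fin (Q ++ i :: j :: i :: Q').length) : Fin (Q ++ j :: i :: j :: Q').length :=
  ⟨if p.val = Q.length then Q.length + 2
    else if p.val = Q.length + 2 then Q.length else p.val, by
    have h := p.2
    simp only [List.length_append, List.length_cons] at h ⊢
    split
    · omega
    · split <;> omega⟩

namespace SwcAux

/-! ### Deleting positions from a list, via a boolean predicate on indices -/

variable {B : Type*}

/-- Delete the letters at positions where `f` is `true`. -/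
def cw (f : ℕ → Bool) : List B → List B
  | [] => []
  | a :: l => if f 0 then cw (fun k => f (k + 1)) l else a :: cw (fun k => f (k + 1)) l

theorem cw_congr : ∀ (L : List B) (f g : ℕ → Bool), (∀ k, k < L.length → f k = g k) →
    cw f L = cw g L
  | [], _, _, _ => rfl
  | a :: l, f, g, h => by
    have h0 : f 0 = g 0 := h 0 (by simp)
    have ih := cw_congr l (fun k => f (k + 1)) (fun k => g (k + 1))
      (fun k hk => h (k + 1) (by simp; omega))
    simp only [cw, h0, ih]

theorem cw_append : ∀ (X Y : List B) (f : ℕ → Bool),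
    cw f (X ++ Y) = cw f X ++ cw (fun k => f (k + X.length)) Y
  | [], Y, f => by simp [cw]
  | a :: X, Y, f => by
    simp only [List.cons_append, cw, List.length_cons, List.append_eq]
    rw [cw_append X Y (fun k => f (k + 1))]
    have hfn : (fun k => f (k + X.length + 1)) = (fun k => f (k + (X.length + 1))) := by
      funext k; rfl
    rw [hfn]
    split <;> simp

theorem filter_finRange_map : ∀ (L : List B) (f : ℕ → Bool),
    (((List.finRange L.length).filter (fun p => !f p.val)).map L.get) = cw f L
  | [], f => rfl
  | a :: l, f => by
    show (((List.finRange (l.length + 1)).filter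
        (fun p : Fin (l.length + 1) => !f p.val)).map (a :: l).get) = cw f (a :: l)
    rw [List.finRange_succ, List.filter_cons]
    have key : ((List.finRange l.length).map Fin.succ).filter
          (fun p => !f p.val)
        = ((List.finRange l.length).filter (fun p => !f (p.val + 1))).map Fin.succ := by
      rw [List.filter_map]
      congr 1
    rw [key]
    have key2 : (((List.finRange l.length).filter (fun p => !f (p.val + 1))).map Fin.succ).map
        (a :: l).get = ((List.finRange l.length).filter (fun p => !f (p.val + 1))).map l.get := by
      rw [List.map_map]; congr 1
    have ih := filter_finRange_map l (fun k => f (k + 1))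
    simp only [cw]
    by_cases hf : f 0 = true
    · simp only [Fin.val_zero, hf, Bool.not_true, if_neg, if_true]
      simpa [key2] using ih
    · simp only [Fin.val_zero, Bool.not_eq_true] at hf
      simp only [Fin.val_zero, hf]
      simp only [Bool.not_false, if_true]
      simp only [List.map_cons, key2]
      simp [ih, List.get_cons_zero]

theorem cword_eq_cw (L : List B) (T : Finset (Fin L.length)) :
    cword L T = cw (fun k => decide (∃ p ∈ T, (p : ℕ) = k)) L := by
  rw [← filter_finRange_map]
  unfold cword
  congr 1
  apply List.filter_congr
  intro p _
  simp only [Bool.not_eq_true', decide_eq_false_iff_not, decide_not]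
  congr 1
  apply decide_eq_decide.mpr
  constructor
  · rintro hp
    exact ⟨p, hp, rfl⟩
  · rintro ⟨q, hq, hqv⟩
    rwa [show q = p from Fin.ext hqv] at hq

theorem cw_triple (a b c : B) (f : ℕ → Bool) :
    cw f [a, b, c] = ((if f 0 = true then ([] : List B) else [a]) ++
      (if f 1 = true then ([] : List B) else [b])) ++
      (if f 2 = true then ([] : List B) else [c]) := by
  show (if f 0 then _ else _) = _
  split_ifs with h0 h1 h2 h1 h2 h2 h2 <;>
    simp_all [cw, show (0:ℕ)+1 = 1 from rfl, show (0:ℕ)+1+1 = 2 from rfl]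

/-! ### Braid move on `containsRed` -/

theorem sublist_triple {a b c : B} {l : List B} (h : l.Sublist [a, b, c]) :
    l = [] ∨ l = [a] ∨ l = [b] ∨ l = [c] ∨ l = [a, b] ∨ l = [a, c] ∨ l = [b, c] ∨
      l = [a, b, c] := by
  simp only [List.sublist_cons_iff, List.sublist_nil] at h
  aesop

variable {W : Type*} [Group W] {M : CoxeterMatrix B} (cs : CoxeterSystem M W)

theorem braid3 (i j : B) (h3 : M i j = 3) :
    cs.simple i * cs.simple j * cs.simple i = cs.simple j * cs.simple i * cs.simple j := by
  have h := cs.simple_mul_simple_pow i j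
  rw [h3] at h
  have h' : (cs.simple i * cs.simple j) ^ 3
      = (cs.simple i * cs.simple j * cs.simple i) * (cs.simple j * cs.simple i * cs.simple j) := by
    rw [pow_succ, pow_succ, pow_one]
    simp only [mul_assoc]
  rw [h'] at h
  have hinv := eq_inv_of_mul_eq_one_left h
  rw [hinv]
  simp [mul_inv_rev, cs.inv_simple, mul_assoc]

theorem containsRed_braid_mp (i j : B) (h3 : M i j = 3) (A C : List B) (π : W)
    (h : containsRed cs π (A ++ i :: j :: i :: C)) :
    containsRed cs π (A ++ j :: i :: j :: C) := by
  obtain ⟨P, hsub, hred, hprod⟩ := h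
  rw [show (A ++ i :: j :: i :: C) = A ++ ([i, j, i] ++ C) from rfl,
    List.sublist_append_iff] at hsub
  obtain ⟨P₁, P₂₃, rfl, h1, h23⟩ := hsub
  rw [List.sublist_append_iff] at h23
  obtain ⟨P₂, P₃, rfl, h2, h3'⟩ := h23
  rw [show (A ++ j :: i :: j :: C) = A ++ ([j, i, j] ++ C) from rfl]
  have easy : ∀ R : List B, R.Sublist [j, i, j] → P₂ = R →
      containsRed cs π (A ++ ([j, i, j] ++ C)) := by
    rintro R hs rfl
    exact ⟨P₁ ++ (P₂ ++ P₃), h1.append (hs.append h3'), hred, hprod⟩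
  rcases sublist_triple h2 with h|h|h|h|h|h|h|h
  · exact easy [] (List.nil_sublist _) h
  · exact easy [i] (List.singleton_sublist.mpr (by simp)) h
  · exact easy [j] (List.singleton_sublist.mpr (by simp)) h
  · exact easy [i] (List.singleton_sublist.mpr (by simp)) h
  · exact easy [i, j] (List.Sublist.cons j (List.Sublist.refl [i, j])) h
  · -- `[i, i]` : contradiction with reducedness
    exfalso
    subst h
    have hlen : cs.length (cs.wordProd (P₁ ++ ([i, i] ++ P₃))) = (P₁ ++ ([i, i] ++ P₃)).length :=
      hred
    have hpe : cs.wordProd (P₁ ++ ([i, i] ++ P₃)) = cs.wordProd (P₁ ++ P₃) := by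
      rw [cs.wordProd_append, cs.wordProd_append, cs.wordProd_append]
      simp [CoxeterSystem.wordProd_cons, cs.simple_mul_simple_self, mul_assoc]
    have hle := cs.length_wordProd_le (P₁ ++ P₃)
    rw [hpe] at hlen
    simp only [List.length_append, List.length_cons, List.length_nil] at hlen hle
    omega
  · exact easy [j, i] (List.Sublist.cons₂ j (List.Sublist.cons₂ i (List.nil_sublist [j]))) h
  · -- `[i, j, i]` : braid move
    subst h
    have hpe : cs.wordProd (P₁ ++ ([j, i, j] ++ P₃))
        = cs.wordProd (P₁ ++ ([i, j, i] ++ P₃)) := by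
      rw [cs.wordProd_append, cs.wordProd_append, cs.wordProd_append, cs.wordProd_append]
      congr 2
      simp [CoxeterSystem.wordProd_cons, ← mul_assoc, braid3 cs i j h3]
    refine ⟨P₁ ++ ([j, i, j] ++ P₃), h1.append ((List.Sublist.refl _).append h3'), ?_, ?_⟩
    · unfold CoxeterSystem.IsReduced at hred ⊢
      rw [hpe]
      simpa using hred
    · rw [hpe, hprod]

theorem containsRed_braid (i j : B) (h3 : M i j = 3) (A C : List B) (π : W) :
    containsRed cs π (A ++ i :: j :: i :: C) ↔ containsRed cs π (A ++ j :: i :: j :: C) :=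
  ⟨containsRed_braid_mp cs i j h3 A C π,
    containsRed_braid_mp cs j i ((M.symmetric j i).trans h3) A C π⟩

/-! ### The index swap -/

/-- The swap of the indices `n` and `n + 2`. -/
def sig (n k : ℕ) : ℕ := if k = n then n + 2 else if k = n + 2 then n else k

theorem sig_sig (n k : ℕ) : sig n (sig n k) = k := by
  unfold sig; split_ifs <;> omega

theorem sig_eq_iff (n a k : ℕ) : sig n a = k ↔ a = sig n k := by
  constructor
  · rintro rfl; rw [sig_sig]
  · rintro rfl; rw [sig_sig]

end SwcAux

open SwcAux

/-- for `m_{ij} = 3`, the maximal subcomplex of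
`Δ₁ = Δ(Q s_i s_j s_i Q'; π)` containing neither the middle vertex `f₂` of the braid
block nor the edge `{f₁, f₃}`, and the analogous maximal subcomplex of
`Δ₂ = Δ(Q s_j s_i s_j Q'; π)`, are isomorphic via the map fixing all positions of `Q`
and `Q'` and sending `f₁ ↦ g₃`, `f₃ ↦ g₁`. -/
theorem swc_braid_tilde_iso {B W : Type*} [Group W] {M : CoxeterMatrix B}
    (cs : CoxeterSystem M W) (Q Q' : List B) (i j : B) (hm : M i j = 3) (π : W) :
    ∀ T : Finset (Fin (Q ++ i :: j :: i :: Q').length),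
      (T ∈ SWC cs (Q ++ i :: j :: i :: Q') π ∧
          (⟨Q.length + 1, by simp only [List.length_append, List.length_cons]; omega⟩ :
            Fin (Q ++ i :: j :: i :: Q').length) ∉ T ∧
          ¬ ({⟨Q.length, by simp only [List.length_append, List.length_cons]; omega⟩,
              ⟨Q.length + 2, by simp only [List.length_append, List.length_cons]; omega⟩} :
              Finset (Fin (Q ++ i :: j :: i :: Q').length)) ⊆ T) ↔
        (T.image (braidSwap Q Q' i j) ∈ SWC cs (Q ++ j :: i :: j :: Q') π ∧
          (⟨Q.length + 1, by simp only [List.length_append, List.length_cons]; omega⟩ :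
            Fin (Q ++ j :: i :: j :: Q').length) ∉ T.image (braidSwap Q Q' i j) ∧
          ¬ ({⟨Q.length, by simp only [List.length_append, List.length_cons]; omega⟩,
              ⟨Q.length + 2, by simp only [List.length_append, List.length_cons]; omega⟩} :
              Finset (Fin (Q ++ j :: i :: j :: Q').length)) ⊆
            T.image (braidSwap Q Q' i j)) := by
  intro T
  classical
  set f : ℕ → Bool := fun k => decide (∃ p ∈ T, (p : ℕ) = k) with hfdef
  have hfe : ∀ k, f k = decide (∃ p ∈ T, (p : ℕ) = k) := fun k => by rw [hfdef]
  set P1 : Prop := (∃ p ∈ T, (p : ℕ) = Q.length) with hP1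
  set P2 : Prop := (∃ p ∈ T, (p : ℕ) = Q.length + 1) with hP2
  set P3 : Prop := (∃ p ∈ T, (p : ℕ) = Q.length + 2) with hP3
  have hval : ∀ p : Fin (Q ++ i :: j :: i :: Q').length,
      ((braidSwap Q Q' i j p) : ℕ) = SwcAux.sig Q.length p.val := fun _ => rfl
  -- membership characterizations
  have hmem1 : ∀ v : Fin (Q ++ i :: j :: i :: Q').length,
      v ∈ T ↔ (∃ p ∈ T, (p : ℕ) = (v : ℕ)) := by
    intro v; constructor
    · intro hv; exact ⟨v, hv, rfl⟩
    · rintro ⟨p, hp, hpv⟩; rwa [show p = v from Fin.ext hpv] at hp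
  have hmem2 : ∀ v : Fin (Q ++ j :: i :: j :: Q').length,
      v ∈ T.image (braidSwap Q Q' i j) ↔
        (∃ p ∈ T, (p : ℕ) = SwcAux.sig Q.length (v : ℕ)) := by
    intro v
    rw [Finset.mem_image]
    constructor
    · rintro ⟨p, hp, rfl⟩
      exact ⟨p, hp, by rw [hval p, SwcAux.sig_sig]⟩
    · rintro ⟨p, hp, hpv⟩
      refine ⟨p, hp, ?_⟩
      apply Fin.ext
      rw [hval p, hpv, SwcAux.sig_sig]
  -- evaluations of sig
  have hsig1 : SwcAux.sig Q.length (Q.length + 1) = Q.length + 1 := by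
    unfold SwcAux.sig; split_ifs <;> omega
  have hsig0 : SwcAux.sig Q.length Q.length = Q.length + 2 := by
    unfold SwcAux.sig; split_ifs <;> omega
  have hsig2 : SwcAux.sig Q.length (Q.length + 2) = Q.length := by
    unfold SwcAux.sig; split_ifs <;> omega
  -- the conditions in terms of P1, P2, P3
  have hA2 : ∀ pf, ((⟨Q.length + 1, pf⟩ : Fin (Q ++ i :: j :: i :: Q').length) ∈ T) ↔ P2 :=
    fun pf => hmem1 _
  have hA1 : ∀ pf, ((⟨Q.length, pf⟩ : Fin (Q ++ i :: j :: i :: Q').length) ∈ T) ↔ P1 :=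
    fun pf => hmem1 _
  have hA3 : ∀ pf, ((⟨Q.length + 2, pf⟩ : Fin (Q ++ i :: j :: i :: Q').length) ∈ T) ↔ P3 :=
    fun pf => hmem1 _
  have hB2 : ∀ pf, ((⟨Q.length + 1, pf⟩ : Fin (Q ++ j :: i :: j :: Q').length)
      ∈ T.image (braidSwap Q Q' i j)) ↔ P2 := by
    intro pf
    refine (hmem2 _).trans ?_
    constructor
    · rintro ⟨p, hp, hv⟩; exact ⟨p, hp, hv.trans hsig1⟩
    · rintro ⟨p, hp, hv⟩; exact ⟨p, hp, hv.trans hsig1.symm⟩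
  have hB1 : ∀ pf, ((⟨Q.length, pf⟩ : Fin (Q ++ j :: i :: j :: Q').length)
      ∈ T.image (braidSwap Q Q' i j)) ↔ P3 := by
    intro pf
    refine (hmem2 _).trans ?_
    constructor
    · rintro ⟨p, hp, hv⟩; exact ⟨p, hp, hv.trans hsig0⟩
    · rintro ⟨p, hp, hv⟩; exact ⟨p, hp, hv.trans hsig0.symm⟩
  have hB3 : ∀ pf, ((⟨Q.length + 2, pf⟩ : Fin (Q ++ j :: i :: j :: Q').length)
      ∈ T.image (braidSwap Q Q' i j)) ↔ P1 := by
    intro pf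
    refine (hmem2 _).trans ?_
    constructor
    · rintro ⟨p, hp, hv⟩; exact ⟨p, hp, hv.trans hsig2⟩
    · rintro ⟨p, hp, hv⟩; exact ⟨p, hp, hv.trans hsig2.symm⟩
  -- subset conditions
  have hAsub : ∀ pf1 pf3,
      (({⟨Q.length, pf1⟩, ⟨Q.length + 2, pf3⟩} :
        Finset (Fin (Q ++ i :: j :: i :: Q').length)) ⊆ T) ↔ (P1 ∧ P3) := by
    intro pf1 pf3
    rw [Finset.insert_subset_iff, Finset.singleton_subset_iff]
    exact and_congr (hA1 _) (hA3 _)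
  have hBsub : ∀ pf1 pf3,
      (({⟨Q.length, pf1⟩, ⟨Q.length + 2, pf3⟩} :
        Finset (Fin (Q ++ j :: i :: j :: Q').length)) ⊆ T.image (braidSwap Q Q' i j)) ↔
        (P3 ∧ P1) := by
    intro pf1 pf3
    rw [Finset.insert_subset_iff, Finset.singleton_subset_iff]
    exact and_congr (hB1 _) (hB3 _)
  -- the F2 predicate for the image
  have hF2 : ∀ k, (decide (∃ p ∈ T.image (braidSwap Q Q' i j), (p : ℕ) = k) : Bool)
      = f (SwcAux.sig Q.length k) := by
    intro k
    rw [hfe]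
    apply decide_eq_decide.mpr
    constructor
    · rintro ⟨q, hq, rfl⟩
      rw [Finset.mem_image] at hq
      obtain ⟨p, hp, rfl⟩ := hq
      exact ⟨p, hp, by rw [hval p, SwcAux.sig_sig]⟩
    · rintro ⟨p, hp, hv⟩
      exact ⟨braidSwap Q Q' i j p, Finset.mem_image_of_mem _ hp,
        by rw [hval p, hv, SwcAux.sig_sig]⟩
  -- the key equivalence of the SWC memberships
  have key : ¬P2 → ¬(P1 ∧ P3) →
      (T ∈ SWC cs (Q ++ i :: j :: i :: Q') π ↔
        T.image (braidSwap Q Q' i j) ∈ SWC cs (Q ++ j :: i :: j :: Q') π) := by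
    intro hp2 hp13
    have l0 : f (0 + Q.length) = decide P1 := by rw [Nat.zero_add, hfe]
    have l1 : f (1 + Q.length) = decide P2 := by rw [Nat.add_comm, hfe]
    have l2 : f (2 + Q.length) = decide P3 := by rw [Nat.add_comm, hfe]
    have E1 : cword (Q ++ i :: j :: i :: Q') T =
        cw f Q ++ ((((if decide P1 = true then ([] : List B) else [i]) ++
          (if decide P2 = true then ([] : List B) else [j])) ++
          (if decide P3 = true then ([] : List B) else [i])) ++
          cw (fun k => f (k + 3 + Q.length)) Q') := by
      calc cword (Q ++ i :: j :: i :: Q') T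
          = cw f (Q ++ ([i, j, i] ++ Q')) := cword_eq_cw _ T
        _ = cw f Q ++ cw (fun k => f (k + Q.length)) ([i, j, i] ++ Q') := cw_append _ _ _
        _ = cw f Q ++ (cw (fun k => f (k + Q.length)) [i, j, i] ++
              cw (fun k => f (k + 3 + Q.length)) Q') := by rw [cw_append]; rfl
        _ = _ := by rw [cw_triple, l0, l1, l2]
    have m0 : f (SwcAux.sig Q.length (0 + Q.length)) = decide P3 := by
      rw [show SwcAux.sig Q.length (0 + Q.length) = Q.length + 2 by
        unfold SwcAux.sig; split_ifs <;> omega, hfe]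
    have m1 : f (SwcAux.sig Q.length (1 + Q.length)) = decide P2 := by
      rw [show SwcAux.sig Q.length (1 + Q.length) = Q.length + 1 by
        unfold SwcAux.sig; split_ifs <;> omega, hfe]
    have m2 : f (SwcAux.sig Q.length (2 + Q.length)) = decide P1 := by
      rw [show SwcAux.sig Q.length (2 + Q.length) = Q.length by
        unfold SwcAux.sig; split_ifs <;> omega, hfe]
    have E2 : cword (Q ++ j :: i :: j :: Q') (T.image (braidSwap Q Q' i j)) =
        cw f Q ++ ((((if decide P3 = true then ([] : List B) else [j]) ++
          (if decide P2 = true then ([] : List B) else [i])) ++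
          (if decide P1 = true then ([] : List B) else [j])) ++
          cw (fun k => f (k + 3 + Q.length)) Q') := by
      set F2 : ℕ → Bool := fun k => decide (∃ p ∈ T.image (braidSwap Q Q' i j), (p : ℕ) = k)
        with hF2def
      calc cword (Q ++ j :: i :: j :: Q') (T.image (braidSwap Q Q' i j))
          = cw F2 (Q ++ ([j, i, j] ++ Q')) := cword_eq_cw _ _
        _ = cw F2 Q ++ cw (fun k => F2 (k + Q.length)) ([j, i, j] ++ Q') := cw_append _ _ _
        _ = cw F2 Q ++ (cw (fun k => F2 (k + Q.length)) [j, i, j] ++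
              cw (fun k => F2 (k + 3 + Q.length)) Q') := by rw [cw_append]; rfl
        _ = cw f Q ++ (cw (fun k => F2 (k + Q.length)) [j, i, j] ++
              cw (fun k => f (k + 3 + Q.length)) Q') := by
            rw [cw_congr Q F2 f (fun k hk => by
              rw [hF2def]
              refine (hF2 k).trans ?_
              congr 1
              unfold SwcAux.sig; split_ifs <;> omega),
              cw_congr Q' (fun k => F2 (k + 3 + Q.length)) (fun k => f (k + 3 + Q.length))
                (fun k hk => by
                  rw [hF2def]
                  refine (hF2 (k + 3 + Q.length)).trans ?_
                  congr 1
                  unfold SwcAux.sig; split_ifs <;> omega)]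
        _ = _ := by
            rw [cw_triple]
            simp only [hF2def]
            rw [hF2 (0 + Q.length), hF2 (1 + Q.length), hF2 (2 + Q.length), m0, m1, m2]
    show containsRed cs π (cword (Q ++ i :: j :: i :: Q') T) ↔
      containsRed cs π (cword (Q ++ j :: i :: j :: Q') (T.image (braidSwap Q Q' i j)))
    rw [E1, E2, decide_eq_false hp2]
    by_cases hp1 : P1
    · have hp3 : ¬P3 := fun h3 => hp13 ⟨hp1, h3⟩
      rw [decide_eq_true hp1, decide_eq_false hp3]
      simp only [if_true, Bool.false_eq_true, if_false, List.nil_append, List.append_nil]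
    · rw [decide_eq_false hp1]
      by_cases hp3 : P3
      · rw [decide_eq_true hp3]
        simp only [if_true, Bool.false_eq_true, if_false, List.nil_append, List.append_nil]
      · rw [decide_eq_false hp3]
        simp only [Bool.false_eq_true, if_false]
        exact containsRed_braid cs i j hm (cw f Q) (cw (fun k => f (k + 3 + Q.length)) Q') π
  constructor
  · rintro ⟨h1, h2, h3⟩
    have hp2 : ¬P2 := fun hp => h2 ((hA2 _).mpr hp)
    have hp13 : ¬(P1 ∧ P3) := fun hp => h3 ((hAsub _ _).mpr hp)
    refine ⟨(key hp2 hp13).mp h1, ?_, ?_⟩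
    · intro hmem; exact hp2 ((hB2 _).mp hmem)
    · intro hsub
      have := (hBsub _ _).mp hsub
      exact hp13 ⟨this.2, this.1⟩
  · rintro ⟨h1, h2, h3⟩
    have hp2 : ¬P2 := fun hp => h2 ((hB2 _).mpr hp)
    have hp13 : ¬(P1 ∧ P3) := fun hp => h3 ((hBsub _ _).mpr ⟨hp.2, hp.1⟩)
    refine ⟨(key hp2 hp13).mpr h1, ?_, ?_⟩
    · intro hmem; exact hp2 ((hA2 _).mp hmem)
    · intro hsub; exact hp13 ((hAsub _ _).mp hsub)
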